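/- Let K be a semiring and Σ = Σ_call ⊔ Σ_int ⊔ Σ_ret a visibly pushdown alphabet, and let M_VPL be the OPM for VPL. Then for every weighted nested word automaton A over Σ and K there exists a restricted weighted operator precedence automaton B over (Σ, M_VPL) and K such that ⟦A⟧(w) = ⟦B⟧(w) for all w ∈ (Σ, M_VPL)^+. -/

import Mathlib

namespace WOP

/-- Precedence relations: yields precedence, equal in precedence, takes precedence. -/
inductive PrecRel where
  | lt | eq | gt
deriving DecidableEq

/-- An operator precedence matrix on `Σ ∪ {#}`, where `none` encodes `#`.
It assigns at most one precedence relation to each ordered pair, with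
`# ⋖ a` and `a ⋗ #` for every letter `a`. -/
structure OPM (A : Type) where
  rel : Option A → Option A → Option PrecRel
  hash_lt : ∀ a : A, rel none (some a) = some .lt
  hash_gt : ∀ a : A, rel (some a) none = some .gt

variable {A B K : Type}

/-- The letter of `#w#` at position `i` (positions `0` and `> |w|` carry `#`, i.e. `none`). -/
def letterAt (w : List A) (i : ℕ) : Option A :=
  if i = 0 then none else w[i - 1]?

section ChainRel

variable (M : OPM A) (L : ℕ → Option A)

mutual
  /-- `ChainMid M L k j`: there are `k = k_s < ... < k_m = j` with
  `L k_s ≐ L k_{s+1} ≐ ... ≐ L k_{m-1} ⋗ L k_m` and the gap condition between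
  consecutive elements. -/
  inductive ChainMid : ℕ → ℕ → Prop where
    | last {k j : ℕ} : M.rel (L k) (L j) = some .gt → ChainGap k j → ChainMid k j
    | step {k k' j : ℕ} : M.rel (L k) (L k') = some .eq → ChainGap k k' →
        ChainMid k' j → ChainMid k j

  /-- The gap condition between consecutive elements of a chain:
  adjacent positions or a chain. -/
  inductive ChainGap : ℕ → ℕ → Prop where
    | adj (k : ℕ) : ChainGap k (k + 1)
    | chain {k k' : ℕ} : Chain k k' → ChainGap k k'

  /-- The chain relation `i ⤳ j`: there are positions `i = k_1 < ... < k_m = j` with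
  `L k_1 ⋖ L k_2 ≐ ... ≐ L k_{m-1} ⋗ L k_m` such that consecutive `k`'s are adjacent
  or themselves related by `⤳`. -/
  inductive Chain : ℕ → ℕ → Prop where
    | mk {i k j : ℕ} : M.rel (L i) (L k) = some .lt → ChainGap i k → ChainMid k j →
        Chain i j
end

end ChainRel

/-- `(Σ,M)^+`: the set of nonempty words compatible with `M`, i.e. `0 ⤳ |w|+1` in `#w#`. -/
def OPWords (M : OPM A) : Set (List A) :=
  {w | w ≠ [] ∧ Chain M (letterAt w) 0 (w.length + 1)}

/-- An (unweighted) operator precedence automaton over the alphabet `A`. -/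
structure OPA (A : Type) where
  Q : Type
  fin : Fintype Q
  I : Set Q
  F : Set Q
  δpush : Set (Q × A × Q)
  δshift : Set (Q × A × Q)
  δpop : Set (Q × Q × Q)

/-- A weighted operator precedence automaton over the alphabet `A` and weights in `K`. -/
structure WOPA (A K : Type) extends OPA A where
  wtpush : Q × A × Q → K
  wtshift : Q × A × Q → K
  wtpop : Q × Q × Q → K

/-- A configuration: a stack of (symbol, state) pairs, a current state,
and the remaining input. -/
structure Config (A Q : Type) where
  stack : List (A × Q)
  state : Q
  input : List A

/-- The moves (transitions) an OPA may take. -/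
inductive Move (A Q : Type) where
  | push (q : Q) (b : A) (r : Q)
  | shift (q : Q) (b : A) (r : Q)
  | pop (q p r : Q)

/-- The topmost stack symbol (`none` = `#` for the empty stack). -/
def topSym {Q : Type} (st : List (A × Q)) : Option A := st.head?.map Prod.fst

/-- One step of an OPA on an OP alphabet `(A, M)`. -/
inductive Exec (M : OPM A) (T : OPA A) : Config A T.Q → Move A T.Q → Config A T.Q → Prop where
  | push {st : List (A × T.Q)} {q r : T.Q} {b : A} {x : List A} :
      M.rel (topSym st) (some b) = some .lt → (q, b, r) ∈ T.δpush →
      Exec M T ⟨st, q, b :: x⟩ (.push q b r) ⟨(b, q) :: st, r, x⟩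
  | shift {st : List (A × T.Q)} {p q r : T.Q} {a b : A} {x : List A} :
      M.rel (some a) (some b) = some .eq → (q, b, r) ∈ T.δshift →
      Exec M T ⟨(a, p) :: st, q, b :: x⟩ (.shift q b r) ⟨(b, p) :: st, r, x⟩
  | pop {st : List (A × T.Q)} {p q r : T.Q} {a : A} {x : List A} :
      M.rel (some a) x.head? = some .gt → (q, p, r) ∈ T.δpop →
      Exec M T ⟨(a, p) :: st, q, x⟩ (.pop q p r) ⟨st, r, x⟩

/-- Execution of a sequence of moves. -/
inductive ExecList (M : OPM A) (T : OPA A) :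
    Config A T.Q → List (Move A T.Q) → Config A T.Q → Prop where
  | nil (c : Config A T.Q) : ExecList M T c [] c
  | cons {c c' c'' : Config A T.Q} {m : Move A T.Q} {ms : List (Move A T.Q)} :
      Exec M T c m c' → ExecList M T c' ms c'' → ExecList M T c (m :: ms) c''

/-- The weight of a move of a weighted OPA. -/
def moveWt [Semiring K] (W : WOPA A K) : Move A W.Q → K
  | .push q b r => W.wtpush (q, b, r)
  | .shift q b r => W.wtshift (q, b, r)
  | .pop q p r => W.wtpop (q, p, r)

/-- The accepting runs of an OPA on `w`: an initial state, a sequence of moves from the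
initial configuration (empty stack, whole input) to a final configuration
(empty stack, input read), and the final state reached. -/
def AccRuns (M : OPM A) (T : OPA A) (w : List A) : Set (T.Q × List (Move A T.Q) × T.Q) :=
  {ρ | ρ.1 ∈ T.I ∧ ρ.2.2 ∈ T.F ∧ ExecList M T ⟨[], ρ.1, w⟩ ρ.2.1 ⟨[], ρ.2.2, []⟩}

/-- The behavior `⟦W⟧(w)`: the sum over all accepting runs of `W` on `w` of the product
(in order) of the weights of the moves of the run. -/
noncomputable def behavior [Semiring K] (M : OPM A) (W : WOPA A K) (w : List A) : K :=
  ∑ᶠ ρ ∈ AccRuns M W.toOPA w, (ρ.2.1.map (moveWt W)).prod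

/-- A weighted OPA is restricted (an rwOPA) if all pop weights are `1`. -/
def Restricted [Semiring K] (W : WOPA A K) : Prop := ∀ t ∈ W.δpop, W.wtpop t = 1

/-- A series `S : (Σ,M)^+ → K` is regular if it is the behavior of some wOPA. -/
def Regular [Semiring K] (M : OPM A) (S : List A → K) : Prop :=
  ∃ W : WOPA A K, ∀ w ∈ OPWords M, S w = behavior M W w

/-- A series is strictly regular if it is the behavior of some restricted wOPA. -/
def StrictlyRegular [Semiring K] (M : OPM A) (S : List A → K) : Prop :=
  ∃ W : WOPA A K, Restricted W ∧ ∀ w ∈ OPWords M, S w = behavior M W w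

/-- Unweighted acceptance. -/
def Accepts (M : OPM A) (T : OPA A) (w : List A) : Prop :=
  ∃ qI ms qF, qI ∈ T.I ∧ qF ∈ T.F ∧ ExecList M T ⟨[], qI, w⟩ ms ⟨[], qF, []⟩

/-- A language `L ⊆ (Σ,M)^+` is an operator precedence language if it is the set of
compatible words accepted by some OPA. -/
def IsOPL (M : OPM A) (L : Set (List A)) : Prop :=
  ∃ T : OPA A, L = {w | w ∈ OPWords M ∧ Accepts M T w}

/-- The intersection `S ∩ L` of a series with a language. -/
noncomputable def interSeries [Semiring K] (S : List A → K) (L : Set (List A))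
    (w : List A) : K :=
  open Classical in if w ∈ L then S w else 0

/-- `h : Σ → Γ` is OPM-preserving: `a ⊙ b` iff `h(a) ⊙ h(b)` for every relation `⊙`. -/
def OPMPreserving (M : OPM A) (M' : OPM B) (h : A → B) : Prop :=
  ∀ a b : A, M.rel (some a) (some b) = M'.rel (some (h a)) (some (h b))

/-- The image series `h(S)(v) = ∑_{w ∈ (Σ,M)^+, h(w) = v} S(w)`. -/
noncomputable def mapSeries [Semiring K] (M : OPM A) (h : A → B) (S : List A → K)
    (v : List B) : K :=
  ∑ᶠ w ∈ {w | w ∈ OPWords M ∧ w.map h = v}, S w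

/-- The pullback OPM `h⁻¹(M)` along `h : Σ' → Σ`. -/
def pullOPM (M : OPM A) (h : B → A) : OPM B where
  rel o₁ o₂ := M.rel (o₁.map h) (o₂.map h)
  hash_lt b := M.hash_lt (h b)
  hash_gt b := M.hash_gt (h b)

/-- The Nivat class `N(Σ,M,K)`: series obtained from a one-state restricted wOPA over a
pulled-back OP alphabet, intersected with an OPL, followed by the projection. -/
def NivatClass [Semiring K] (M : OPM A) (S : List A → K) : Prop :=
  ∃ (B : Type) (_ : Fintype B) (h : B → A) (W : WOPA B K) (L : Set (List B)),
    Restricted W ∧ (∃ q₀ : W.Q, ∀ q : W.Q, q = q₀) ∧ IsOPL (pullOPM M h) L ∧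
    ∀ v ∈ OPWords M,
      S v = mapSeries (pullOPM M h) h (interSeries (behavior (pullOPM M h) W) L) v

/-- An OPL step function: a finite sum `∑ kᵢ · 1_{Lᵢ}` with the `Lᵢ` OPLs forming a
partition of `(Σ,M)^+`. -/
def IsOPLStep [Semiring K] (M : OPM A) (S : List A → K) : Prop :=
  ∃ (n : ℕ) (k : Fin n → K) (L : Fin n → Set (List A)),
    (∀ i, IsOPL M (L i)) ∧ (∀ i j, i ≠ j → Disjoint (L i) (L j)) ∧
    (⋃ i, L i) = OPWords M ∧ ∀ i, ∀ w ∈ L i, S w = k i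



/-- The kind of a symbol of a visibly pushdown alphabet. -/
inductive VKind where
  | call | int | ret
deriving DecidableEq

/-- A weighted nested word automaton over a visibly pushdown alphabet `A`. -/
structure WNWA (A K : Type) where
  Q : Type
  fin : Fintype Q
  I : Set Q
  F : Set Q
  δcall : Set (Q × A × Q)
  δint : Set (Q × A × Q)
  δret : Set (Q × Q × A × Q)
  wtcall : Q × A × Q → K
  wtint : Q × A × Q → K
  wtret : Q × Q × A × Q → K

/-- A configuration of a nested word automaton. -/
structure NConfig (A Q : Type) where
  stack : List Q
  state : Q
  input : List A

/-- The moves of a nested word automaton. -/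
inductive NMove (A Q : Type) where
  | call (q : Q) (a : A) (r : Q)
  | int (q : Q) (a : A) (r : Q)
  | ret (q p : Q) (a : A) (r : Q)

variable {A K : Type}

/-- One step of a wNWA: reading a call pushes the source state, reading an internal
leaves the stack unchanged, reading a return pops the topmost pushed state. -/
inductive NExec (kind : A → VKind) (T : WNWA A K) :
    NConfig A T.Q → NMove A T.Q → NConfig A T.Q → Prop where
  | call {st : List T.Q} {q r : T.Q} {a : A} {x : List A} :
      kind a = .call → (q, a, r) ∈ T.δcall →
      NExec kind T ⟨st, q, a :: x⟩ (.call q a r) ⟨q :: st, r, x⟩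
  | int {st : List T.Q} {q r : T.Q} {a : A} {x : List A} :
      kind a = .int → (q, a, r) ∈ T.δint →
      NExec kind T ⟨st, q, a :: x⟩ (.int q a r) ⟨st, r, x⟩
  | ret {st : List T.Q} {p q r : T.Q} {a : A} {x : List A} :
      kind a = .ret → (q, p, a, r) ∈ T.δret →
      NExec kind T ⟨p :: st, q, a :: x⟩ (.ret q p a r) ⟨st, r, x⟩

/-- Execution of a sequence of moves of a wNWA. -/
inductive NExecList (kind : A → VKind) (T : WNWA A K) :
    NConfig A T.Q → List (NMove A T.Q) → NConfig A T.Q → Prop where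
  | nil (c : NConfig A T.Q) : NExecList kind T c [] c
  | cons {c c' c'' : NConfig A T.Q} {m : NMove A T.Q} {ms : List (NMove A T.Q)} :
      NExec kind T c m c' → NExecList kind T c' ms c'' → NExecList kind T c (m :: ms) c''

/-- The weight of a move of a wNWA. -/
def nMoveWt [Semiring K] (T : WNWA A K) : NMove A T.Q → K
  | .call q a r => T.wtcall (q, a, r)
  | .int q a r => T.wtint (q, a, r)
  | .ret q p a r => T.wtret (q, p, a, r)

/-- Accepting runs of a wNWA on `w`: from an initial state with empty stack to a
final state with empty stack, reading all of `w`. -/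
def NAccRuns (kind : A → VKind) (T : WNWA A K) (w : List A) :
    Set (T.Q × List (NMove A T.Q) × T.Q) :=
  {ρ | ρ.1 ∈ T.I ∧ ρ.2.2 ∈ T.F ∧ NExecList kind T ⟨[], ρ.1, w⟩ ρ.2.1 ⟨[], ρ.2.2, []⟩}

/-- The behavior of a wNWA: the sum over all accepting runs of the ordered product of
the weights of its transitions. -/
noncomputable def nBehavior [Semiring K] (kind : A → VKind) (T : WNWA A K)
    (w : List A) : K :=
  ∑ᶠ ρ ∈ NAccRuns kind T w, (ρ.2.1.map (nMoveWt T)).prod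

/-- The OPM `M_VPL` for visibly pushdown languages: calls yield precedence to calls and
internals, calls are equal in precedence to returns, and returns and internals take
precedence over everything. -/
def vplOPM (kind : A → VKind) : OPM A where
  rel o₁ o₂ :=
    match o₁, o₂ with
    | none, none => none
    | none, some _ => some .lt
    | some _, none => some .gt
    | some a, some b =>
      match kind a, kind b with
      | .call, .call => some .lt
      | .call, .int => some .lt
      | .call, .ret => some .eq
      | _, _ => some .gt
  hash_lt _ := rfl
  hash_gt _ := rfl


section Sim

variable {A K : Type} [Semiring K]

/-- State space of the simulating OPA. -/
abbrev SQ (W : WNWA A K) : Type := W.Q ⊕ W.Q ⊕ W.Q × W.Q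

/-- The simulating restricted weighted OPA. -/
abbrev simW (kind : A → VKind) (W : WNWA A K) : WOPA A K where
  Q := SQ W
  fin := letI := W.fin; inferInstanceAs (Fintype (W.Q ⊕ W.Q ⊕ W.Q × W.Q))
  I := Sum.inl '' W.I
  F := Sum.inl '' W.F
  δpush := {t | (∃ q a r, (q, a, r) ∈ W.δcall ∧ kind a = .call ∧
      t = (Sum.inl q, a, Sum.inl r)) ∨
    (∃ q a r, (q, a, r) ∈ W.δint ∧ kind a = .int ∧
      t = (Sum.inl q, a, Sum.inr (Sum.inl r)))}
  δshift := {t | ∃ q p a r, (q, p, a, r) ∈ W.δret ∧ kind a = .ret ∧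
      t = (Sum.inl q, a, Sum.inr (Sum.inr (p, r)))}
  δpop := {t | (∃ p r, t = (Sum.inr (Sum.inl r), p, Sum.inl r)) ∨
    (∃ p r, t = (Sum.inr (Sum.inr (p, r)), Sum.inl p, Sum.inl r))}
  wtpush := fun t => match t with
    | (Sum.inl q, a, Sum.inl r) => W.wtcall (q, a, r)
    | (Sum.inl q, a, Sum.inr (Sum.inl r)) => W.wtint (q, a, r)
    | _ => 1
  wtshift := fun t => match t with
    | (Sum.inl q, a, Sum.inr (Sum.inr (p, r))) => W.wtret (q, p, a, r)
    | _ => 1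
  wtpop := fun _ => 1

/-- Translation of NWA moves to OPA moves. -/
def tmove (W : WNWA A K) : NMove A W.Q → List (Move A (SQ W))
  | .call q a r => [.push (Sum.inl q) a (Sum.inl r)]
  | .int q a r => [.push (Sum.inl q) a (Sum.inr (Sum.inl r)),
      .pop (Sum.inr (Sum.inl r)) (Sum.inl q) (Sum.inl r)]
  | .ret q p a r => [.shift (Sum.inl q) a (Sum.inr (Sum.inr (p, r))),
      .pop (Sum.inr (Sum.inr (p, r))) (Sum.inl p) (Sum.inl r)]

/-- Translation of NWA move lists. -/
def tlist (W : WNWA A K) : List (NMove A W.Q) → List (Move A (SQ W))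
  | [] => []
  | m :: ms => tmove W m ++ tlist W ms

/-- Decoding of OPA move lists back to NWA move lists. -/
def decode (W : WNWA A K) : List (Move A (SQ W)) → Option (List (NMove A W.Q))
  | [] => some []
  | .push (Sum.inl q) a (Sum.inl r) :: rest =>
      (decode W rest).map (fun ms => .call q a r :: ms)
  | .push (Sum.inl q) a (Sum.inr (Sum.inl r)) :: _ :: rest =>
      (decode W rest).map (fun ms => .int q a r :: ms)
  | .shift (Sum.inl q) a (Sum.inr (Sum.inr (p, r))) :: _ :: rest =>
      (decode W rest).map (fun ms => .ret q p a r :: ms)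
  | _ => none

lemma decode_tmove (W : WNWA A K) (ms : List (NMove A W.Q)) :
    decode W (tlist W ms) = some ms := by
  induction ms with
  | nil => rfl
  | cons m ms ih => cases m <;> simp [List.flatMap_cons, tlist, tmove, decode, ih]

/-- Relation between NWA stacks and OPA stacks. -/
inductive StRel (kind : A → VKind) (W : WNWA A K) : List W.Q → List (A × SQ W) → Prop
  | nil : StRel kind W [] []
  | cons {s : List W.Q} {P : List (A × SQ W)} (a : A) (q : W.Q)
      (h : kind a = VKind.call) (ht : StRel kind W s P) :
      StRel kind W (q :: s) ((a, Sum.inl q) :: P)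

lemma rel_gt (kind : A → VKind) {a : A} (h : kind a = .int ∨ kind a = .ret)
    (o : Option A) : (vplOPM kind).rel (some a) o = some .gt := by
  cases o with
  | none => exact (vplOPM kind).hash_gt a
  | some b => rcases h with h | h <;> cases hb : kind b <;> simp [vplOPM, h, hb]

lemma rel_eq (kind : A → VKind) {a b : A} (ha : kind a = .call) (hb : kind b = .ret) :
    (vplOPM kind).rel (some a) (some b) = some .eq := by
  simp [vplOPM, ha, hb]

lemma rel_lt_push {kind : A → VKind} {W : WNWA A K} {st P} (h : StRel kind W st P)
    {b : A} (hb : kind b = .call ∨ kind b = .int) :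
    (vplOPM kind).rel (topSym P) (some b) = some .lt := by
  cases h with
  | nil => exact (vplOPM kind).hash_lt b
  | cons a q ha _ =>
      rcases hb with hb | hb <;> simp [topSym, vplOPM, ha, hb]

lemma ExecList.append {M : OPM A} {T : OPA A} {c c' c'' : Config A T.Q}
    {l1 l2 : List (Move A T.Q)} (h1 : ExecList M T c l1 c')
    (h2 : ExecList M T c' l2 c'') : ExecList M T c (l1 ++ l2) c'' := by
  induction h1 with
  | nil => simpa
  | cons h _ ih => exact .cons h (ih h2)

lemma wt_push_call (kind : A → VKind) (W : WNWA A K) (q : W.Q) (a : A) (r : W.Q) :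
    moveWt (simW kind W) (.push (Sum.inl q) a (Sum.inl r)) = W.wtcall (q, a, r) := rfl

lemma wt_push_int (kind : A → VKind) (W : WNWA A K) (q : W.Q) (a : A) (r : W.Q) :
    moveWt (simW kind W) (.push (Sum.inl q) a (Sum.inr (Sum.inl r))) = W.wtint (q, a, r) := rfl

lemma wt_shift_ret (kind : A → VKind) (W : WNWA A K) (q p : W.Q) (a : A) (r : W.Q) :
    moveWt (simW kind W) (.shift (Sum.inl q) a (Sum.inr (Sum.inr (p, r)))) =
      W.wtret (q, p, a, r) := rfl

lemma wt_pop_one (kind : A → VKind) (W : WNWA A K) (q p r : SQ W) :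
    moveWt (simW kind W) (.pop q p r) = 1 := rfl

lemma wt_eq (kind : A → VKind) (W : WNWA A K) (ms : List (NMove A W.Q)) :
    ((tlist W ms).map (moveWt (simW kind W))).prod = (ms.map (nMoveWt W)).prod := by
  induction ms with
  | nil => rfl
  | cons m ms ih =>
      cases m with
      | call q a r =>
          simp only [tlist, tmove, List.cons_append, List.nil_append,
            List.map_cons, List.prod_cons, ih, nMoveWt]
          rw [wt_push_call]
      | int q a r =>
          simp only [tlist, tmove, List.cons_append, List.nil_append,
            List.map_cons, List.prod_cons, ih, nMoveWt]
          rw [wt_push_int, wt_pop_one, one_mul]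
      | ret q p a r =>
          simp only [tlist, tmove, List.cons_append, List.nil_append,
            List.map_cons, List.prod_cons, ih, nMoveWt]
          rw [wt_shift_ret, wt_pop_one, one_mul]

/-- Forward simulation. -/
lemma fwd {kind : A → VKind} {W : WNWA A K} {c c' : NConfig A W.Q}
    {ms : List (NMove A W.Q)} (h : NExecList kind W c ms c') :
    ∀ P, StRel kind W c.stack P → ∃ P', StRel kind W c'.stack P' ∧
      ExecList (vplOPM kind) (simW kind W).toOPA ⟨P, Sum.inl c.state, c.input⟩
        (tlist W ms) ⟨P', Sum.inl c'.state, c'.input⟩ := by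
  induction h with
  | nil c => exact fun P h => ⟨P, h, .nil _⟩
  | cons hstep _ ih =>
      intro P hrel
      cases hstep with
      | call hk hmem =>
          obtain ⟨P', hrel', hex⟩ := ih ((_, Sum.inl _) :: P) (.cons _ _ hk hrel)
          refine ⟨P', hrel', ?_⟩
          refine ExecList.cons ?_ hex
          exact Exec.push (rel_lt_push hrel (Or.inl hk)) (Or.inl ⟨_, _, _, hmem, hk, rfl⟩)
      | int hk hmem =>
          obtain ⟨P', hrel', hex⟩ := ih P hrel
          refine ⟨P', hrel', ?_⟩
          refine ExecList.cons
            (Exec.push (rel_lt_push hrel (Or.inr hk)) (Or.inr ⟨_, _, _, hmem, hk, rfl⟩)) ?_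
          exact ExecList.cons (Exec.pop (rel_gt kind (Or.inl hk) _)
            (Or.inl ⟨_, _, rfl⟩)) hex
      | ret hk hmem =>
          cases hrel with
          | cons a0 p ha0 hrel0 =>
              obtain ⟨P', hrel', hex⟩ := ih _ hrel0
              refine ⟨P', hrel', ?_⟩
              refine ExecList.cons (Exec.shift (rel_eq kind ha0 hk)
                ⟨_, _, _, _, hmem, hk, rfl⟩) ?_
              exact ExecList.cons (Exec.pop (rel_gt kind (Or.inr hk) _)
                (Or.inr ⟨_, _, rfl⟩)) hex

/-- Backward simulation. -/
lemma bwd {kind : A → VKind} {W : WNWA A K} :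
    ∀ n (ms' : List (Move A (SQ W))), ms'.length ≤ n →
    ∀ st P q w q2, StRel kind W st P →
      ExecList (vplOPM kind) (simW kind W).toOPA ⟨P, Sum.inl q, w⟩ ms'
        ⟨[], Sum.inl q2, []⟩ →
      ∃ ms, ms' = tlist W ms ∧ NExecList kind W ⟨st, q, w⟩ ms ⟨[], q2, []⟩ := by
  intro n
  induction n with
  | zero =>
      intro ms' hlen st P q w q2 hrel hex
      have hnil : ms' = [] := List.eq_nil_of_length_eq_zero (Nat.le_zero.mp hlen)
      subst hnil
      cases hex
      cases hrel
      exact ⟨[], rfl, .nil _⟩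
  | succ n ih =>
      intro ms' hlen st P q w q2 hrel hex
      cases hex with
      | nil =>
          cases hrel
          exact ⟨[], rfl, .nil _⟩
      | cons hstep hrest =>
          rename_i m ms₁
          cases hstep with
          | push hlt hmem =>
              rename_i r b x
              rcases hmem with ⟨q1, a1, r1, hδ, hk, heq⟩ | ⟨q1, a1, r1, hδ, hk, heq⟩
              · injection heq with hq h2
                injection h2 with hb hr
                injection hq with hq
                subst hq; subst hb; subst hr
                obtain ⟨ms, rfl, hnex⟩ := ih ms₁ (by simpa using hlen) (q :: st)
                  ((_, Sum.inl q) :: P) r1 x q2 (.cons _ _ hk hrel) hrest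
                exact ⟨.call q _ r1 :: ms, rfl, .cons (.call hk hδ) hnex⟩
              · injection heq with hq h2
                injection h2 with hb hr
                injection hq with hq
                subst hq; subst hb; subst hr
                cases hrest with
                | cons hstep2 hrest2 =>
                    rename_i m2 ms₂
                    cases hstep2 with
                    | push hlt2 hmem2 =>
                        rcases hmem2 with ⟨_, _, _, _, _, h⟩ | ⟨_, _, _, _, _, h⟩ <;>
                          simp at h
                    | shift hlt2 hmem2 =>
                        rcases hmem2 with ⟨_, _, _, _, _, _, h⟩
                        simp at h
                    | pop hgt2 hmem2 =>
                        rename_i r'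
                        rcases hmem2 with ⟨p2, r2, h⟩ | ⟨p2, r2, h⟩
                        · injection h with h1 h2
                          injection h2 with h2 h3
                          injection h1 with h1
                          injection h1 with h1
                          subst h1; subst h3; subst h2
                          obtain ⟨ms, rfl, hnex⟩ := ih ms₂
                            (by simp only [List.length_cons] at hlen; omega) st P r1 x q2
                            hrel hrest2
                          exact ⟨.int q _ r1 :: ms, rfl, .cons (.int hk hδ) hnex⟩
                        · injection h with h1 h2
                          injection h1 with h1
                          injection h1
          | shift hlt hmem =>
              rename_i P' p0 r a0 b x
              rcases hmem with ⟨q1, p1, a1, r1, hδ, hk, heq⟩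
              injection heq with hq h2
              injection h2 with hb hr
              injection hq with hq
              subst hq; subst hb; subst hr
              cases hrel with
              | cons a q' hcall hrel' =>
                  cases hrest with
                  | cons hstep2 hrest2 =>
                      rename_i m2 ms₂
                      cases hstep2 with
                      | push hlt2 hmem2 =>
                          rcases hmem2 with ⟨_, _, _, _, _, h⟩ | ⟨_, _, _, _, _, h⟩ <;>
                            simp at h
                      | shift hlt2 hmem2 =>
                          rcases hmem2 with ⟨_, _, _, _, _, _, h⟩
                          simp at h
                      | pop hgt2 hmem2 =>
                          rename_i r'
                          rcases hmem2 with ⟨p2, r2, h⟩ | ⟨p2, r2, h⟩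
                          · injection h with h1 h2
                            injection h1 with h1
                            injection h1
                          · injection h with h1 h2
                            injection h2 with h2 h3
                            injection h1 with h1
                            injection h1 with h1
                            injection h1 with h1a h1b
                            injection h2 with h2
                            subst h1a; subst h1b; subst h3; subst h2
                            obtain ⟨ms, rfl, hnex⟩ := ih ms₂
                              (by simp only [List.length_cons] at hlen; omega) _ P' r1 x q2
                              hrel' hrest2
                            exact ⟨.ret q _ _ _ :: ms, rfl, .cons (.ret hk hδ) hnex⟩
          | pop hgt hmem =>
              rcases hmem with ⟨p1, r1, h⟩ | ⟨p1, r1, h⟩ <;>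
                (injection h with h1 h2; injection h1)

end Sim

/-- For every weighted nested word automaton over a visibly pushdown alphabet there is a
restricted weighted OPA over the OPM `M_VPL` with the same behavior on `(Σ, M_VPL)^+`. -/
theorem wNWA_to_rwOPA [Fintype A] [Semiring K] (kind : A → VKind) (W : WNWA A K) :
    ∃ B : WOPA A K, Restricted B ∧
      ∀ w ∈ OPWords (vplOPM kind), nBehavior kind W w = behavior (vplOPM kind) B w := by
  refine ⟨simW kind W, fun t _ => rfl, fun w _ => ?_⟩
  unfold nBehavior behavior
  refine finsum_mem_eq_of_bijOn
    (fun ρ => (Sum.inl ρ.1, tlist W ρ.2.1, Sum.inl ρ.2.2)) ⟨?_, ?_, ?_⟩ ?_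
  · rintro ⟨q0, ms, qF⟩ ⟨hI, hF, hex⟩
    obtain ⟨P', hrel', hex'⟩ := fwd hex [] .nil
    cases hrel'
    exact ⟨⟨q0, hI, rfl⟩, ⟨qF, hF, rfl⟩, hex'⟩
  · rintro ⟨q0, ms, qF⟩ - ⟨q0', ms', qF'⟩ - heq
    have e1 := congrArg Prod.fst heq
    have e2 := congrArg (fun p => p.2.1) heq
    have e3 := congrArg (fun p => p.2.2) heq
    simp only at e1 e2 e3
    have e2' : ms = ms' := by
      have := congrArg (decode W) e2
      rw [decode_tmove, decode_tmove] at this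
      exact Option.some.inj this
    have e1' := Sum.inl.inj e1
    have e3' := Sum.inl.inj e3
    subst e1'; subst e2'; subst e3'
    rfl
  · rintro ⟨s1, ms', s3⟩ ⟨hI, hF, hex⟩
    obtain ⟨q0, hq0, rfl⟩ := hI
    obtain ⟨qF, hqF, rfl⟩ := hF
    obtain ⟨ms, hms, hnex⟩ := bwd ms'.length ms' le_rfl [] [] q0 w qF .nil hex
    exact ⟨(q0, ms, qF), ⟨hq0, hqF, hnex⟩, by simp only []; rw [← hms]⟩
  · exact fun ρ _ => (wt_eq kind W ρ.2.1).symm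
end WOP
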